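/- Let H be a real Hilbert space and A: H → 2^H paramonotone and maximally monotone. Then the following are equivalent: (i) A is strictly monotone; (ii) A is strictly monotone on every line segment in dom A; (iii) A⁻¹ is at most single-valued; (iv) the resolvent J_A = (Id + A)⁻¹ is strictly nonexpansive, i.e., ‖J_A x - J_A y‖ < ‖x - y‖ for all x ≠ y; (v) Id - J_A is strictly monotone. -/
import Mathlib


open scoped InnerProductSpace

variable {H : Type*} [NormedAddCommGroup H] [InnerProductSpace ℝ H] [CompleteSpace H]

/-- A set-valued operator `A : H → 2^H` is monotone. -/
def MonotoneOp (A : H → Set H) : Prop :=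
  ∀ x₀ x₁ v₀ v₁ : H, v₀ ∈ A x₀ → v₁ ∈ A x₁ → 0 ≤ ⟪v₀ - v₁, x₀ - x₁⟫_ℝ

/-- A set-valued operator is strictly monotone. -/
def StrictlyMonotoneOp (A : H → Set H) : Prop :=
  ∀ x₀ x₁ v₀ v₁ : H, v₀ ∈ A x₀ → v₁ ∈ A x₁ → x₀ ≠ x₁ → 0 < ⟪v₀ - v₁, x₀ - x₁⟫_ℝ

/-- A monotone operator is paramonotone. -/
def Paramonotone (A : H → Set H) : Prop :=
  MonotoneOp A ∧
  ∀ x₀ x₁ v₀ v₁ : H, v₀ ∈ A x₀ → v₁ ∈ A x₁ → ⟪x₀ - x₁, v₀ - v₁⟫_ℝ = 0 →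
    v₀ ∈ A x₁ ∧ v₁ ∈ A x₀

/-- A monotone operator is maximally monotone. -/
def MaximallyMonotoneOp (A : H → Set H) : Prop :=
  MonotoneOp A ∧
  ∀ x v : H, (∀ y w : H, w ∈ A y → 0 ≤ ⟪v - w, x - y⟫_ℝ) → v ∈ A x

theorem stmt18 (A : H → Set H) (hpara : Paramonotone A) (hmax : MaximallyMonotoneOp A)
    (J : H → H) (hJ : ∀ x : H, x - J x ∈ A (J x)) :
    (StrictlyMonotoneOp A ↔
      (∀ x₀ x₁ : H, x₀ ≠ x₁ → segment ℝ x₀ x₁ ⊆ {x | (A x).Nonempty} →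
        ∀ y₀ ∈ segment ℝ x₀ x₁, ∀ y₁ ∈ segment ℝ x₀ x₁, ∀ v₀ ∈ A y₀, ∀ v₁ ∈ A y₁,
          y₀ ≠ y₁ → 0 < ⟪v₀ - v₁, y₀ - y₁⟫_ℝ)) ∧
    (StrictlyMonotoneOp A ↔ (∀ v x y : H, v ∈ A x → v ∈ A y → x = y)) ∧
    (StrictlyMonotoneOp A ↔ (∀ x y : H, x ≠ y → ‖J x - J y‖ < ‖x - y‖)) ∧
    (StrictlyMonotoneOp A ↔
      (∀ x y : H, x ≠ y → 0 < ⟪(x - J x) - (y - J y), x - y⟫_ℝ)) := by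
  obtain ⟨hmono, hparam⟩ := hpara
  -- resolvent uniqueness: if v ∈ A z then J (z + v) = z
  have hres : ∀ z v : H, v ∈ A z → J (z + v) = z := by
    intro z v hv
    have h1 := hJ (z + v)
    have h2 := hmono z (J (z + v)) v ((z + v) - J (z + v)) hv h1
    have he : (v - ((z + v) - J (z + v))) = -(z - J (z + v)) := by abel
    rw [he, inner_neg_left] at h2
    have h3 : ⟪z - J (z + v), z - J (z + v)⟫_ℝ ≤ 0 := by linarith
    have h4 : z - J (z + v) = 0 :=
      inner_self_eq_zero.mp (le_antisymm h3 real_inner_self_nonneg)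
    exact (sub_eq_zero.mp h4).symm
  -- (i) ↔ (iii)
  have h13 : StrictlyMonotoneOp A ↔ (∀ v x y : H, v ∈ A x → v ∈ A y → x = y) := by
    constructor
    · intro hs v x y hx hy
      by_contra hne
      have := hs x y v v hx hy hne
      simp at this
    · intro hinv x₀ x₁ v₀ v₁ h0 h1 hne
      rcases lt_or_eq_of_le (hmono x₀ x₁ v₀ v₁ h0 h1) with h | h
      · exact h
      · exfalso
        have hz : ⟪x₀ - x₁, v₀ - v₁⟫_ℝ = 0 := by
          rw [real_inner_comm]; exact h.symm
        obtain ⟨hv01, _⟩ := hparam x₀ x₁ v₀ v₁ h0 h1 hz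
        exact hne (hinv v₀ x₀ x₁ h0 hv01)
  -- (iii) → (i) stated more directly for reuse
  have hinv_to_strict := h13.mpr
  -- (ii) → (iii)
  have h2to3 : (∀ x₀ x₁ : H, x₀ ≠ x₁ → segment ℝ x₀ x₁ ⊆ {x | (A x).Nonempty} →
        ∀ y₀ ∈ segment ℝ x₀ x₁, ∀ y₁ ∈ segment ℝ x₀ x₁, ∀ v₀ ∈ A y₀, ∀ v₁ ∈ A y₁,
          y₀ ≠ y₁ → 0 < ⟪v₀ - v₁, y₀ - y₁⟫_ℝ) →
      (∀ v x y : H, v ∈ A x → v ∈ A y → x = y) := by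
    intro hseg v x y hx hy
    by_contra hne
    -- v ∈ A z for every z on the segment, by maximal monotonicity
    have hmem : ∀ z ∈ segment ℝ x y, v ∈ A z := by
      intro z hz
      obtain ⟨a, b, ha, hb, hab, hz⟩ := hz
      apply hmax.2
      intro p w hw
      have hzp : z - p = a • (x - p) + b • (y - p) := by
        calc z - p = a • x + b • y - (a • p + b • p) := by
              rw [← hz, ← add_smul, hab, one_smul]
          _ = a • (x - p) + b • (y - p) := by rw [smul_sub, smul_sub]; abel
      rw [hzp, inner_add_right, real_inner_smul_right, real_inner_smul_right]
      have h1 := hmono x p v w hx hw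
      have h2 := hmono y p v w hy hw
      positivity
    have hdom : segment ℝ x y ⊆ {x | (A x).Nonempty} := fun z hz => ⟨v, hmem z hz⟩
    have := hseg x y hne hdom x (left_mem_segment ℝ x y) y (right_mem_segment ℝ x y)
      v hx v hy hne
    simp at this
  -- (i) → (iv)
  have h1to4 : StrictlyMonotoneOp A → ∀ x y : H, x ≠ y → ‖J x - J y‖ < ‖x - y‖ := by
    intro hs x y hxy
    by_cases hJxy : J x = J y
    · rw [hJxy, sub_self, norm_zero]
      exact norm_sub_pos_iff.mpr hxy
    · have hstr := hs (J x) (J y) (x - J x) (y - J y) (hJ x) (hJ y) hJxy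
      have he : (x - J x) - (y - J y) = (x - y) - (J x - J y) := by abel
      rw [he, inner_sub_left] at hstr
      have hself : ⟪J x - J y, J x - J y⟫_ℝ = ‖J x - J y‖ ^ 2 := by
        rw [real_inner_self_eq_norm_sq]
      have hle : ⟪x - y, J x - J y⟫_ℝ ≤ ‖x - y‖ * ‖J x - J y‖ := real_inner_le_norm _ _
      have hpos : 0 < ‖J x - J y‖ := norm_sub_pos_iff.mpr hJxy
      nlinarith
  -- (iv) → (v)
  have h4to5 : (∀ x y : H, x ≠ y → ‖J x - J y‖ < ‖x - y‖) →
      ∀ x y : H, x ≠ y → 0 < ⟪(x - J x) - (y - J y), x - y⟫_ℝ := by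
    intro h4 x y hxy
    have he : (x - J x) - (y - J y) = (x - y) - (J x - J y) := by abel
    rw [he, inner_sub_left]
    have hself : ⟪x - y, x - y⟫_ℝ = ‖x - y‖ ^ 2 := by
      rw [real_inner_self_eq_norm_sq]
    have hle : ⟪J x - J y, x - y⟫_ℝ ≤ ‖J x - J y‖ * ‖x - y‖ := real_inner_le_norm _ _
    have hlt := h4 x y hxy
    have hpos : 0 < ‖x - y‖ := norm_sub_pos_iff.mpr hxy
    nlinarith
  -- (v) → (iii)
  have h5to3 : (∀ x y : H, x ≠ y → 0 < ⟪(x - J x) - (y - J y), x - y⟫_ℝ) →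
      ∀ v x y : H, v ∈ A x → v ∈ A y → x = y := by
    intro h5 v x y hx hy
    by_contra hne
    have hjx : J (x + v) = x := hres x v hx
    have hjy : J (y + v) = y := hres y v hy
    have hne' : x + v ≠ y + v := fun h => hne (by
      have := add_right_cancel h; exact this)
    have := h5 (x + v) (y + v) hne'
    rw [hjx, hjy] at this
    have he1 : (x + v - x) - (y + v - y) = (0 : H) := by abel
    rw [he1, inner_zero_left] at this
    exact lt_irrefl 0 this
  refine ⟨?_, h13, ?_, ?_⟩
  · constructor
    · intro hs x₀ x₁ _ _ y₀ _ y₁ _ v₀ hv₀ v₁ hv₁ hne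
      exact hs y₀ y₁ v₀ v₁ hv₀ hv₁ hne
    · intro h2
      exact hinv_to_strict (h2to3 h2)
  · exact ⟨h1to4, fun h4 => hinv_to_strict (h5to3 (h4to5 h4))⟩
  · exact ⟨fun hs => h4to5 (h1to4 hs), fun h5 => hinv_to_strict (h5to3 h5)⟩
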